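/- Let Π be a non-disjunctive (single-head) CNF theory. Every minimal non-outbound set in atom(Π) for Π is super-elementary for Π, i.e., it is elementary for Π and non-outbound in atom(Π) for Π. -/
import Mathlib


structure Clause where
  head : Finset ℕ
  body : Finset ℕ
deriving DecidableEq

abbrev Theory := Finset Clause

/-- interpretation I satisfies clause c -/
def satC (I : Finset ℕ) (c : Clause) : Prop :=
  (c.head ∩ I).Nonempty ∨ ¬ c.body ⊆ I

def isModel (T : Theory) (I : Finset ℕ) : Prop := ∀ c ∈ T, satC I c

def isMinModel (T : Theory) (I : Finset ℕ) : Prop :=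
  isModel T I ∧ ∀ J ⊂ I, ¬ isModel T J

def Positive (T : Theory) : Prop := ∀ c ∈ T, c.head.Nonempty

def Horn (T : Theory) : Prop := ∀ c ∈ T, c.head.card = 1

/-- atoms occurring in a theory -/
def atoms (T : Theory) : Finset ℕ := T.biUnion (fun c => c.head ∪ c.body)

/-- c_{X←} : project head on X -/
def projHeadC (c : Clause) (X : Finset ℕ) : Clause := ⟨c.head ∩ X, c.body⟩
/-- c_X : project head and body on X -/
def projC (c : Clause) (X : Finset ℕ) : Clause := ⟨c.head ∩ X, c.body ∩ X⟩

/-- Π_{X←} -/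
def projHeadT (T : Theory) (X : Finset ℕ) : Theory :=
  (T.image (fun c => projHeadC c X)).filter (fun c => c.head.Nonempty)

/-- Π_X -/
def projT (T : Theory) (X : Finset ℕ) : Theory :=
  (T.image (fun c => projC c X)).filter (fun c => c.head.Nonempty)

/-- Π^{nd} : single-head fragment -/
def nd (T : Theory) : Theory := T.filter (fun c => c.head.card = 1)

/-- the steady set of M for Π is the minimal model of Π^{nd}_{M←} -/
def isSteady (T : Theory) (M S : Finset ℕ) : Prop :=
  isMinModel (nd (projHeadT T M)) S

def simpl (T : Theory) (M S : Finset ℕ) : Theory :=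
  T.filter (fun c => c.head ∩ S = ∅ ∧ c.body ⊆ M)

/-- simplified theory of Π w.r.t. M (with steady set S) -/
def simplT (T : Theory) (M S : Finset ℕ) : Theory := projT (simpl T M S) (M \ S)

/-- E erasable in M for T -/
def Erasable (T : Theory) (M E : Finset ℕ) : Prop :=
  E.Nonempty ∧ E ⊆ M ∧ isModel T (M \ E)

def Outbound (T : Theory) (Y Z : Finset ℕ) : Prop :=
  ∃ c ∈ T, (c.head ∩ Z).Nonempty ∧ (c.body ∩ (Y \ Z)).Nonempty ∧
    c.body ∩ Z = ∅ ∧ c.head ∩ (Y \ Z) = ∅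

def Elementary (T : Theory) (Y : Finset ℕ) : Prop :=
  Y.Nonempty ∧ Y ⊆ atoms T ∧ ∀ Z, Z ⊂ Y → Z.Nonempty → Outbound T Y Z

def HEF (T : Theory) : Prop :=
  ∀ c ∈ T, ∀ E, Elementary T E → (E ∩ c.head).card ≤ 1

def DisjunctiveSet (T : Theory) (S : Finset ℕ) : Prop :=
  ∃ c ∈ T, 1 < (c.head ∩ S).card

def SuperElementary (T : Theory) (X : Finset ℕ) : Prop :=
  Elementary T X ∧ ¬ Outbound T (atoms T) X

def posForm (T : Theory) (phi : ℕ) : Theory :=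
  T.filter (fun c => c.head.Nonempty) ∪
  (T.filter (fun c => c.head = ∅)).image (fun c => ⟨{phi}, c.body⟩) ∪
  (atoms T).image (fun a => ⟨{a}, {phi}⟩)

theorem stmt11 (T : Theory) (hnd : Horn T) (O : Finset ℕ)
    (hO : O.Nonempty) (hsub : O ⊆ atoms T)
    (hnout : ¬ Outbound T (atoms T) O)
    (hmin : ∀ O' : Finset ℕ, O' ⊂ O → O'.Nonempty → Outbound T (atoms T) O') :
    SuperElementary T O := by
  refine ⟨⟨hO, hsub, ?_⟩, hnout⟩
  intro Z hZ hZne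
  obtain ⟨c, hcT, hhZ, hbA, hbZ, hhA⟩ := hmin Z hZ hZne
  refine ⟨c, hcT, hhZ, ?_, hbZ, ?_⟩
  · -- body ∩ (O \ Z) nonempty
    by_contra hemp
    rw [Finset.not_nonempty_iff_eq_empty] at hemp
    obtain ⟨h, hh⟩ := hhZ
    rw [Finset.mem_inter] at hh
    have hhO : h ∈ O := hZ.subset hh.2
    -- head = {h} since Horn
    have hcard := hnd c hcT
    have hhead : c.head = {h} := by
      apply Finset.eq_singleton_iff_unique_mem.mpr
      refine ⟨hh.1, fun x hx => ?_⟩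
      have := Finset.card_le_one.mp (le_of_eq hcard) x hx h hh.1
      exact this
    have hbO : c.body ∩ O = ∅ := by
      apply Finset.eq_empty_iff_forall_notMem.mpr
      intro x hx
      rw [Finset.mem_inter] at hx
      have hxZ : x ∉ Z := by
        intro hxZ
        exact Finset.eq_empty_iff_forall_notMem.mp hbZ x (Finset.mem_inter.mpr ⟨hx.1, hxZ⟩)
      exact Finset.eq_empty_iff_forall_notMem.mp hemp x
        (Finset.mem_inter.mpr ⟨hx.1, Finset.mem_sdiff.mpr ⟨hx.2, hxZ⟩⟩)
    apply hnout
    refine ⟨c, hcT, ⟨h, Finset.mem_inter.mpr ⟨hh.1, hhO⟩⟩, ?_, hbO, ?_⟩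
    · obtain ⟨b, hb⟩ := hbA
      rw [Finset.mem_inter, Finset.mem_sdiff] at hb
      refine ⟨b, Finset.mem_inter.mpr ⟨hb.1, Finset.mem_sdiff.mpr ⟨hb.2.1, fun hbO' => ?_⟩⟩⟩
      exact Finset.eq_empty_iff_forall_notMem.mp hbO b (Finset.mem_inter.mpr ⟨hb.1, hbO'⟩)
    · apply Finset.eq_empty_iff_forall_notMem.mpr
      intro x hx
      rw [Finset.mem_inter, Finset.mem_sdiff, hhead, Finset.mem_singleton] at hx
      exact hx.2.2 (hx.1 ▸ hhO)
  · -- head ∩ (O \ Z) = ∅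
    apply Finset.eq_empty_iff_forall_notMem.mpr
    intro x hx
    rw [Finset.mem_inter, Finset.mem_sdiff] at hx
    exact Finset.eq_empty_iff_forall_notMem.mp hhA x
      (Finset.mem_inter.mpr ⟨hx.1, Finset.mem_sdiff.mpr ⟨hsub hx.2.1, hx.2.2⟩⟩)
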